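/- Let (A,B) be a NITA with non-real b_3 ∈ B of degree 3 satisfying b_3·b̄_3 = 1 + c_8 and b_3² = b̄_3 + b_6 where b_6 ∈ B is non-real, b_3·b_6 = c_8 + b_10 with b_10 ∈ B real, with no nontrivial basis elements of degree 1 or 2, and assume (c̄_9·b_3, c_9) = 1 where c_9 is the degree-9 basis element with b_3·b_10 = b_15 + b̄_6 + c̄_9. Then there exists c_3 ∈ B of degree 3 with b_3·c̄_9 = b̄_15 + c_9 + c_3, and the element c_3 satisfies c_3·c̄_3 = 1 + b_8 for some real b_8 ∈ B of degree 8 with b_8 ≠ c_8, as well as b_3·c̄_3 = c_9 and b_3·c_3 = b_9 for a real b_9 ∈ B of degree 9. -/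

import Mathlib

/-- A normalized table algebra datum on a commutative `ℂ`-algebra `A`:
a distinguished basis `B` containing `1`, an involutive algebra
endomorphism `bar` permuting `B`, a bilinear form for which `B` is
orthonormal and which satisfies `(a, bc) = (a·b̄, c)`, nonnegative real
structure constants, and a degree homomorphism positive on `B`. -/
structure TAData (A : Type) [CommRing A] [Algebra ℂ A] : Type where
  B : Finset A
  one_mem : (1 : A) ∈ B
  indep : LinearIndependent ℂ (fun b : {x : A // x ∈ B} => (b : A))
  span_top : Submodule.span ℂ (B : Set A) = ⊤
  bar : A →ₐ[ℂ] A
  bar_bar : ∀ a : A, bar (bar a) = a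
  bar_mem : ∀ b ∈ B, bar b ∈ B
  ip : A →ₗ[ℂ] A →ₗ[ℂ] ℂ
  ip_symm : ∀ a b : A, ip a b = ip b a
  ip_self : ∀ b ∈ B, ip b b = 1
  ip_ne : ∀ b ∈ B, ∀ c ∈ B, b ≠ c → ip b c = 0
  ip_assoc : ∀ a b c : A, ip a (b * c) = ip (a * bar b) c
  struct_nonneg : ∀ b ∈ B, ∀ c ∈ B, ∀ d ∈ B, ∃ r : ℝ, 0 ≤ r ∧ ip (b * c) d = (r : ℂ)
  deg : A →ₐ[ℂ] ℂ
  deg_pos : ∀ b ∈ B, ∃ r : ℝ, 0 < r ∧ deg b = (r : ℂ)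

namespace TAData

variable {A : Type} [CommRing A] [Algebra ℂ A]

/-- Integrality (making a table algebra a NITA): all structure constants are
nonnegative integers and all degrees are positive integers. -/
def Integral (T : TAData A) : Prop :=
  (∀ b ∈ T.B, ∀ c ∈ T.B, ∀ d ∈ T.B, ∃ n : ℕ, T.ip (b * c) d = (n : ℂ)) ∧
  (∀ b ∈ T.B, ∃ n : ℕ, 0 < n ∧ T.deg b = (n : ℂ))

/-- `L₁(B) = {1}` and `L₂(B) = ∅`: no nontrivial basis elements of degree 1 or 2. -/
def NoSmall (T : TAData A) : Prop :=
  (∀ b ∈ T.B, T.deg b = 1 → b = 1) ∧ (∀ b ∈ T.B, T.deg b ≠ 2)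

/-- The table algebra is generated (as an algebra) by `b` (and its conjugate). -/
def GeneratedBy (T : TAData A) (b : A) : Prop :=
  Algebra.adjoin ℂ ({b, T.bar b} : Set A) = ⊤

/-- A table subset of `B`: contains `1`, closed under the involution and under
supports of products. -/
def IsTableSubset (T : TAData A) (C : Set A) : Prop :=
  C ⊆ ↑T.B ∧ (1 : A) ∈ C ∧ (∀ b ∈ C, T.bar b ∈ C) ∧
    ∀ b ∈ C, ∀ c ∈ C, ∀ d ∈ T.B, T.ip (b * c) d ≠ 0 → d ∈ C

end TAData

namespace TAData

variable {A : Type} [CommRing A] [Algebra ℂ A]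

variable (T : TAData A)

/-- basis coming from `B` -/
noncomputable def bb : Module.Basis {x : A // x ∈ T.B} ℂ A :=
  Module.Basis.mk T.indep (by
    rw [top_le_iff, ← T.span_top]
    congr 1
    ext x
    simp [Set.range, Subtype.exists])

lemma bb_apply (i : {x : A // x ∈ T.B}) : T.bb i = (i : A) := by
  simp [bb]

lemma ipl_add (x y z : A) : T.ip (x + y) z = T.ip x z + T.ip y z := by
  rw [map_add, LinearMap.add_apply]

lemma ipl_sub (x y z : A) : T.ip (x - y) z = T.ip x z - T.ip y z := by
  rw [map_sub, LinearMap.sub_apply]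

lemma ipr_add (x y z : A) : T.ip x (y + z) = T.ip x y + T.ip x z := map_add _ _ _

lemma ipr_sub (x y z : A) : T.ip x (y - z) = T.ip x y - T.ip x z := map_sub _ _ _

lemma ipl_smul (c : ℂ) (x z : A) : T.ip (c • x) z = c * T.ip x z := by
  rw [map_smul, LinearMap.smul_apply, smul_eq_mul]

lemma ipl_zero (z : A) : T.ip 0 z = 0 := by rw [map_zero, LinearMap.zero_apply]

lemma ip_bb (x : A) (i : {x : A // x ∈ T.B}) : T.ip x i = T.bb.repr x i := by
  conv_lhs => rw [← T.bb.sum_repr x]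
  rw [map_sum, LinearMap.sum_apply]
  rw [Finset.sum_eq_single i]
  · rw [map_smul, LinearMap.smul_apply, bb_apply, T.ip_self _ i.2, smul_eq_mul, mul_one]
  · intro j _ hj
    rw [map_smul, LinearMap.smul_apply, bb_apply, T.ip_ne _ j.2 _ i.2 (by
      exact fun h => hj (Subtype.ext h)), smul_eq_mul, mul_zero]
  · intro h; exact absurd (Finset.mem_univ i) h

lemma ext_ip {x y : A} (h : ∀ d ∈ T.B, T.ip x d = T.ip y d) : x = y := by
  apply T.bb.ext_elem
  intro i
  rw [← ip_bb, ← ip_bb]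
  exact h i i.2

lemma deg_expand (x : A) :
    T.deg x = ∑ i : {a : A // a ∈ T.B}, T.ip x i * T.deg i := by
  conv_lhs => rw [← T.bb.sum_repr x]
  rw [map_sum]
  refine Finset.sum_congr rfl fun i _ => ?_
  rw [map_smul, smul_eq_mul, ip_bb, bb_apply]

lemma ip_self_expand (x : A) :
    T.ip x x = ∑ i : {a : A // a ∈ T.B}, T.ip x i * T.ip x i := by
  calc T.ip x x = T.ip x (∑ i, T.bb.repr x i • T.bb i) := by rw [T.bb.sum_repr]
  _ = ∑ i, T.bb.repr x i • T.ip x (T.bb i) := by rw [map_sum]; simp [map_smul]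
  _ = _ := by
      refine Finset.sum_congr rfl fun i _ => ?_
      rw [smul_eq_mul, bb_apply, ip_bb]

/-- rule (R1) -/
lemma ip_mul_bar (a b c : A) : T.ip (a * b) c = T.ip b (T.bar a * c) := by
  rw [T.ip_symm, T.ip_assoc, T.ip_symm, mul_comm]

def IsNat (x : A) : Prop := ∀ d ∈ T.B, ∃ n : ℕ, T.ip x d = (n : ℂ)

lemma isNat_mul (hInt : T.Integral) {b c : A} (hb : b ∈ T.B) (hc : c ∈ T.B) :
    T.IsNat (b * c) := fun d hd => hInt.1 b hb c hc d hd

lemma nat_decomp (hInt : T.Integral) (hSmall : T.NoSmall) (x : A) (hx : T.IsNat x) :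
    ∃ n m : {a : A // a ∈ T.B} → ℕ,
      (∀ i : {a : A // a ∈ T.B}, T.ip x (i : A) = (n i : ℂ)) ∧
      (∀ i : {a : A // a ∈ T.B}, T.deg (i : A) = (m i : ℂ)) ∧ (∀ i, 0 < m i) ∧
      (∀ i : {a : A // a ∈ T.B}, (i : A) ≠ 1 → 3 ≤ m i) ∧
      T.deg x = ((∑ i, n i * m i : ℕ) : ℂ) ∧
      T.ip x x = ((∑ i, n i * n i : ℕ) : ℂ) := by
  choose n hn using fun i : {a : A // a ∈ T.B} => hx i i.2
  choose m hm0 hm using fun i : {a : A // a ∈ T.B} => hInt.2 i i.2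
  refine ⟨n, m, hn, hm, hm0, ?_, ?_, ?_⟩
  · intro i hi1
    by_contra h
    push_neg at h
    have h0 := hm0 i
    have h12 : m i = 1 ∨ m i = 2 := by omega
    rcases h12 with h1 | h2
    · exact hi1 (hSmall.1 i i.2 (by rw [hm i, h1]; norm_num))
    · exact hSmall.2 i i.2 (by rw [hm i, h2]; norm_num)
  · rw [deg_expand, Nat.cast_sum]
    refine Finset.sum_congr rfl fun i _ => ?_
    rw [hn, hm]; push_cast; ring
  · rw [ip_self_expand, Nat.cast_sum]
    refine Finset.sum_congr rfl fun i _ => ?_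
    rw [hn]; push_cast; ring



lemma eq_single_of_deg3 (hInt : T.Integral) (hSmall : T.NoSmall) (x : A)
    (hx : T.IsNat x) (h1 : T.ip x 1 = 0) (hd : T.deg x = 3) :
    ∃ c ∈ T.B, T.deg c = 3 ∧ x = c := by
  classical
  obtain ⟨n, m, hn, hm, hm0, hm3, hdeg, -⟩ := T.nat_decomp hInt hSmall x hx
  have hsum : (∑ i, n i * m i) = 3 := by
    have : ((∑ i, n i * m i : ℕ) : ℂ) = ((3 : ℕ) : ℂ) := by
      rw [← hdeg, hd]; norm_num
    exact_mod_cast this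
  set i1 : {a : A // a ∈ T.B} := ⟨1, T.one_mem⟩ with hi1
  have hn1 : n i1 = 0 := by
    have := hn i1
    rw [h1] at this
    exact_mod_cast this.symm
  have hex : ∃ i, n i ≠ 0 := by
    by_contra hc
    push_neg at hc
    rw [Finset.sum_eq_zero (fun i _ => by rw [hc i, zero_mul])] at hsum
    omega
  obtain ⟨i0, hi0⟩ := hex
  have hne1 : (i0 : A) ≠ 1 := by
    intro h
    exact hi0 (by rw [show i0 = i1 from Subtype.ext h, hn1])
  have hm3' := hm3 i0 hne1
  have hle : n i0 * m i0 ≤ 3 := by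
    rw [← hsum]
    exact Finset.single_le_sum (f := fun i => n i * m i) (fun i _ => Nat.zero_le _)
      (Finset.mem_univ i0)
  have hge : 3 ≤ n i0 * m i0 := by
    calc 3 ≤ m i0 := hm3'
    _ ≤ n i0 * m i0 := Nat.le_mul_of_pos_left _ (Nat.pos_of_ne_zero hi0)
  have heq3 : n i0 * m i0 = 3 := le_antisymm hle hge
  have hni0 : n i0 = 1 := by
    by_contra hc
    have h2 : 2 ≤ n i0 := by omega
    have : 2 * 3 ≤ n i0 * m i0 := Nat.mul_le_mul h2 hm3'
    omega
  have hmi0 : m i0 = 3 := by rw [hni0, one_mul] at heq3; exact heq3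
  have hrest : ∀ j, j ≠ i0 → n j = 0 := by
    intro j hj
    have hz : (∑ i ∈ Finset.univ.erase i0, n i * m i) = 0 := by
      have h := Finset.add_sum_erase Finset.univ (fun i => n i * m i) (Finset.mem_univ i0)
      beta_reduce at h
      omega
    have := (Finset.sum_eq_zero_iff.mp hz) j (Finset.mem_erase.mpr ⟨hj, Finset.mem_univ j⟩)
    have := hm0 j
    rcases Nat.mul_eq_zero.mp ‹n j * m j = 0› with h | h
    · exact h
    · omega
  refine ⟨(i0 : A), i0.2, by rw [hm i0, hmi0]; norm_num, ?_⟩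
  apply T.ext_ip
  intro d hd'
  by_cases hdi : d = (i0 : A)
  · subst hdi
    rw [T.ip_self _ hd', hn i0, hni0]; norm_num
  · have : n ⟨d, hd'⟩ = 0 := hrest ⟨d, hd'⟩ (fun h => hdi (congrArg Subtype.val h))
    rw [T.ip_ne _ i0.2 _ hd' (Ne.symm hdi)]
    have := hn ⟨d, hd'⟩
    simp only [this, ‹n ⟨d, hd'⟩ = 0›] at *
    simpa using ‹T.ip x ↑(⟨d, hd'⟩ : {a : A // a ∈ T.B}) = ((0:ℕ) : ℂ)›

lemma eq_zero_of_deg0 (hInt : T.Integral) (hSmall : T.NoSmall) (x : A)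
    (hx : T.IsNat x) (hd : T.deg x = 0) : x = 0 := by
  classical
  obtain ⟨n, m, hn, hm, hm0, -, hdeg, -⟩ := T.nat_decomp hInt hSmall x hx
  have hsum : (∑ i, n i * m i) = 0 := by
    have : ((∑ i, n i * m i : ℕ) : ℂ) = ((0 : ℕ) : ℂ) := by
      rw [← hdeg, hd]; norm_num
    exact_mod_cast this
  have hall : ∀ i, n i = 0 := by
    intro i
    have := (Finset.sum_eq_zero_iff.mp hsum) i (Finset.mem_univ i)
    rcases Nat.mul_eq_zero.mp this with h | h
    · exact h
    · have := hm0 i; omega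
  apply T.ext_ip
  intro d hd'
  rw [T.ipl_zero]
  have := hn ⟨d, hd'⟩
  rw [hall ⟨d, hd'⟩] at this
  simpa using this

lemma false_of_deg2 (hInt : T.Integral) (hSmall : T.NoSmall) (x : A)
    (hx : T.IsNat x) (h1 : T.ip x 1 = 0) (hd : T.deg x = 2) : False := by
  classical
  obtain ⟨n, m, hn, hm, hm0, hm3, hdeg, -⟩ := T.nat_decomp hInt hSmall x hx
  have hsum : (∑ i, n i * m i) = 2 := by
    have : ((∑ i, n i * m i : ℕ) : ℂ) = ((2 : ℕ) : ℂ) := by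
      rw [← hdeg, hd]; norm_num
    exact_mod_cast this
  set i1 : {a : A // a ∈ T.B} := ⟨1, T.one_mem⟩ with hi1
  have hn1 : n i1 = 0 := by
    have := hn i1
    rw [h1] at this
    exact_mod_cast this.symm
  have hex : ∃ i, n i ≠ 0 := by
    by_contra hc
    push_neg at hc
    rw [Finset.sum_eq_zero (fun i _ => by rw [hc i, zero_mul])] at hsum
    omega
  obtain ⟨i0, hi0⟩ := hex
  have hne1 : (i0 : A) ≠ 1 := by
    intro h
    exact hi0 (by rw [show i0 = i1 from Subtype.ext h, hn1])
  have hm3' := hm3 i0 hne1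
  have hle : n i0 * m i0 ≤ 2 := by
    rw [← hsum]
    exact Finset.single_le_sum (f := fun i => n i * m i) (fun i _ => Nat.zero_le _)
      (Finset.mem_univ i0)
  have hge : 3 ≤ n i0 * m i0 := by
    calc 3 ≤ m i0 := hm3'
    _ ≤ n i0 * m i0 := Nat.le_mul_of_pos_left _ (Nat.pos_of_ne_zero hi0)
  omega

lemma mem_of_norm1 (hInt : T.Integral) (hSmall : T.NoSmall) (x : A)
    (hx : T.IsNat x) (hnrm : T.ip x x = 1) : ∃ c ∈ T.B, x = c := by
  classical
  obtain ⟨n, m, hn, -, -, -, -, hnorm⟩ := T.nat_decomp hInt hSmall x hx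
  have hsum : (∑ i, n i * n i) = 1 := by
    have : ((∑ i, n i * n i : ℕ) : ℂ) = ((1 : ℕ) : ℂ) := by
      rw [← hnorm, hnrm]; norm_num
    exact_mod_cast this
  have hex : ∃ i, n i ≠ 0 := by
    by_contra hc
    push_neg at hc
    rw [Finset.sum_eq_zero (fun i _ => by rw [hc i, zero_mul])] at hsum
    omega
  obtain ⟨i0, hi0⟩ := hex
  have hle : n i0 * n i0 ≤ 1 := by
    rw [← hsum]
    exact Finset.single_le_sum (f := fun i => n i * n i) (fun i _ => Nat.zero_le _)
      (Finset.mem_univ i0)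
  have hni0 : n i0 = 1 := by nlinarith [Nat.pos_of_ne_zero hi0]
  have hrest : ∀ j, j ≠ i0 → n j = 0 := by
    intro j hj
    have hz : (∑ i ∈ Finset.univ.erase i0, n i * n i) = 0 := by
      have h := Finset.add_sum_erase Finset.univ (fun i => n i * n i) (Finset.mem_univ i0)
      beta_reduce at h
      rw [hni0] at h
      omega
    have := (Finset.sum_eq_zero_iff.mp hz) j (Finset.mem_erase.mpr ⟨hj, Finset.mem_univ j⟩)
    rcases Nat.mul_eq_zero.mp this with h | h <;> exact h
  refine ⟨(i0 : A), i0.2, ?_⟩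
  apply T.ext_ip
  intro d hd'
  by_cases hdi : d = (i0 : A)
  · subst hdi
    rw [T.ip_self _ hd', hn i0, hni0]; norm_num
  · rw [T.ip_ne _ i0.2 _ hd' (Ne.symm hdi)]
    have h0 : n ⟨d, hd'⟩ = 0 := hrest ⟨d, hd'⟩ (fun h => hdi (congrArg Subtype.val h))
    have := hn ⟨d, hd'⟩
    rw [h0] at this
    simpa using this

lemma decomp_norm2 (hInt : T.Integral) (hSmall : T.NoSmall) (x e : A)
    (hx : T.IsNat x) (he : e ∈ T.B) (hnrm : T.ip x x = 2) (hce : T.ip x e = 1) :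
    ∃ f ∈ T.B, f ≠ e ∧ x = e + f := by
  classical
  obtain ⟨n, m, hn, -, -, -, -, hnorm⟩ := T.nat_decomp hInt hSmall x hx
  set ie : {a : A // a ∈ T.B} := ⟨e, he⟩ with hie
  have hsum : (∑ i, n i * n i) = 2 := by
    have : ((∑ i, n i * n i : ℕ) : ℂ) = ((2 : ℕ) : ℂ) := by
      rw [← hnorm, hnrm]; norm_num
    exact_mod_cast this
  have hne : n ie = 1 := by
    have := hn ie
    rw [hce] at this
    exact_mod_cast this.symm
  have herase : (∑ i ∈ Finset.univ.erase ie, n i * n i) = 1 := by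
    have h := Finset.add_sum_erase Finset.univ (fun i => n i * n i) (Finset.mem_univ ie)
    beta_reduce at h
    rw [hne] at h
    omega
  have hex : ∃ i ∈ Finset.univ.erase ie, n i ≠ 0 := by
    by_contra hc
    push_neg at hc
    rw [Finset.sum_eq_zero (fun i hi => by rw [hc i hi, zero_mul])] at herase
    omega
  obtain ⟨i0, hi0m, hi0⟩ := hex
  have hle : n i0 * n i0 ≤ 1 := by
    rw [← herase]
    exact Finset.single_le_sum (f := fun i => n i * n i) (fun i _ => Nat.zero_le _) hi0m
  have hni0 : n i0 = 1 := by nlinarith [Nat.pos_of_ne_zero hi0]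
  have hrest : ∀ j, j ≠ i0 → j ≠ ie → n j = 0 := by
    intro j hj hj'
    have hz : (∑ i ∈ (Finset.univ.erase ie).erase i0, n i * n i) = 0 := by
      have h := Finset.add_sum_erase (Finset.univ.erase ie) (fun i => n i * n i) hi0m
      beta_reduce at h
      rw [hni0] at h
      omega
    have := (Finset.sum_eq_zero_iff.mp hz) j
      (Finset.mem_erase.mpr ⟨hj, Finset.mem_erase.mpr ⟨hj', Finset.mem_univ j⟩⟩)
    rcases Nat.mul_eq_zero.mp this with h | h <;> exact h
  have hi0ie : i0 ≠ ie := (Finset.mem_erase.mp hi0m).1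
  refine ⟨(i0 : A), i0.2, fun h => hi0ie (Subtype.ext h), ?_⟩
  apply T.ext_ip
  intro d hd'
  rw [T.ipl_add]
  by_cases hdi : d = e
  · subst hdi
    rw [T.ip_self _ he, T.ip_ne _ i0.2 _ he (fun h => hi0ie (Subtype.ext h)), hce]
    ring
  · by_cases hdi0 : d = (i0 : A)
    · subst hdi0
      rw [T.ip_self _ i0.2, T.ip_ne _ he _ i0.2 (fun h => hdi h.symm)]
      have := hn i0
      rw [hni0] at this
      rw [this]; norm_num
    · rw [T.ip_ne _ he _ hd' (fun h => hdi h.symm), T.ip_ne _ i0.2 _ hd' (Ne.symm hdi0)]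
      have h0 : n ⟨d, hd'⟩ = 0 :=
        hrest ⟨d, hd'⟩ (fun h => hdi0 (congrArg Subtype.val h))
          (fun h => hdi (congrArg Subtype.val h))
      have := hn ⟨d, hd'⟩
      rw [h0] at this
      rw [this]; norm_num

lemma coeff_zero_of_deg_lt (hInt : T.Integral) (hSmall : T.NoSmall) (x d : A)
    (hx : T.IsNat x) (hd' : d ∈ T.B) (k l : ℕ)
    (hdx : T.deg x = (k : ℂ)) (hdd : T.deg d = (l : ℂ)) (hkl : k < l) :
    T.ip x d = 0 := by
  classical
  obtain ⟨n, m, hn, hm, hm0, -, hdeg, -⟩ := T.nat_decomp hInt hSmall x hx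
  set id0 : {a : A // a ∈ T.B} := ⟨d, hd'⟩ with hid
  have hsum : (∑ i, n i * m i) = k := by
    have : ((∑ i, n i * m i : ℕ) : ℂ) = ((k : ℕ) : ℂ) := by rw [← hdeg, hdx]
    exact_mod_cast this
  have hml : m id0 = l := by
    have := hm id0
    rw [hdd] at this
    exact_mod_cast this.symm
  have hzero : n id0 = 0 := by
    by_contra hc
    have hge : l ≤ n id0 * m id0 := by
      rw [← hml]
      exact Nat.le_mul_of_pos_left _ (Nat.pos_of_ne_zero hc)
    have hle : n id0 * m id0 ≤ k := by
      rw [← hsum]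
      exact Finset.single_le_sum (f := fun i => n i * m i) (fun i _ => Nat.zero_le _)
        (Finset.mem_univ id0)
    omega
  have h := hn id0
  rw [hzero] at h
  simpa using h



end TAData


set_option maxHeartbeats 1000000 in
/-- Lemma 5.2, parts 1–6 and 9: under Hypothesis 5.1 with `b₁₀`
real and `(c̄₉b₃, c₉) = 1`, one gets `b₃c̄₉ = b̄₁₅ + c₉ + c₃` with `c₃ ∈ B` of
degree 3, `c₃c̄₃ = 1 + b₈` for a real `b₈ ≠ c₈` of degree 8, `b₃c̄₃ = c₉` and
`b₃c₃ = b₉` with `b₉` real of degree 9. -/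
theorem stmt_11 {A : Type} [CommRing A] [Algebra ℂ A] (T : TAData A)
    (hInt : T.Integral) (hSmall : T.NoSmall)
    (b3 c8 b6 b10 b15 c9 : A)
    (hb3 : b3 ∈ T.B) (hd3 : T.deg b3 = 3) (hnr : T.bar b3 ≠ b3)
    (hgen : T.GeneratedBy b3)
    (hc8 : c8 ∈ T.B) (hd8 : T.deg c8 = 8)
    (hmul : b3 * T.bar b3 = 1 + c8)
    (hb6 : b6 ∈ T.B) (hd6 : T.deg b6 = 6) (hnr6 : T.bar b6 ≠ b6)
    (hsq : b3 * b3 = T.bar b3 + b6)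
    (hb10 : b10 ∈ T.B) (hd10 : T.deg b10 = 10) (hreal10 : T.bar b10 = b10)
    (hprod : b3 * b6 = c8 + b10)
    (hb15 : b15 ∈ T.B) (hd15 : T.deg b15 = 15)
    (hprod15 : T.bar b3 * b6 = b3 + b15)
    (hc9 : c9 ∈ T.B) (hd9 : T.deg c9 = 9)
    (hprod10 : b3 * b10 = b15 + T.bar b6 + T.bar c9)
    (hip : T.ip (T.bar c9 * b3) c9 = 1) :
    ∃ c3 ∈ T.B, T.deg c3 = 3 ∧
      b3 * T.bar c9 = T.bar b15 + c9 + c3 ∧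
      (∃ b8 ∈ T.B, T.deg b8 = 8 ∧ T.bar b8 = b8 ∧ b8 ≠ c8 ∧
        c3 * T.bar c3 = 1 + b8) ∧
      b3 * T.bar c3 = c9 ∧
      ∃ b9 ∈ T.B, T.deg b9 = 9 ∧ T.bar b9 = b9 ∧ b3 * c3 = b9 := by
  classical
  -- memberships of bars
  have hv3m : T.bar b3 ∈ T.B := T.bar_mem b3 hb3
  have hv6m : T.bar b6 ∈ T.B := T.bar_mem b6 hb6
  have hv15m : T.bar b15 ∈ T.B := T.bar_mem b15 hb15
  have hv9m : T.bar c9 ∈ T.B := T.bar_mem c9 hc9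
  -- barred equations
  have hmul' : T.bar b3 * b3 = 1 + T.bar c8 := by
    have h := congrArg T.bar hmul
    simpa [map_mul, map_add, map_one, T.bar_bar] using h
  have hbarc8 : T.bar c8 = c8 := by linear_combination hmul - hmul'
  rw [hbarc8] at hmul'
  have hsq' : T.bar b3 * T.bar b3 = b3 + T.bar b6 := by
    have h := congrArg T.bar hsq
    simpa [map_mul, map_add, T.bar_bar] using h
  have hprod' : T.bar b3 * T.bar b6 = c8 + b10 := by
    have h := congrArg T.bar hprod
    simpa [map_mul, map_add, T.bar_bar, hbarc8, hreal10] using h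
  have hprod15' : b3 * T.bar b6 = T.bar b3 + T.bar b15 := by
    have h := congrArg T.bar hprod15
    simpa [map_mul, map_add, T.bar_bar] using h
  have hprod10' : T.bar b3 * b10 = T.bar b15 + b6 + c9 := by
    have h := congrArg T.bar hprod10
    simpa [map_mul, map_add, T.bar_bar, hreal10] using h
  -- degrees of bars
  have hdv3 : T.deg (T.bar b3) = 3 := by
    have h := congrArg T.deg hmul'
    simp only [map_mul, map_add, map_one, hd3, hd8] at h
    linear_combination h / 3
  have hdv6 : T.deg (T.bar b6) = 6 := by
    have h := congrArg T.deg hprod'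
    simp only [map_mul, map_add, hdv3, hd8, hd10] at h
    linear_combination h / 3
  have hdv15 : T.deg (T.bar b15) = 15 := by
    have h := congrArg T.deg hprod15'
    simp only [map_mul, map_add, hd3, hdv3, hdv6] at h
    linear_combination -h
  have hdv9 : T.deg (T.bar c9) = 9 := by
    have h := congrArg T.deg hprod10
    simp only [map_mul, map_add, hd3, hd10, hd15, hdv6] at h
    linear_combination -h
  -- helpers
  have degne : ∀ x y : A, T.deg x ≠ T.deg y → x ≠ y :=
    fun x y h hxy => h (by rw [hxy])
  have ipz : ∀ x, x ∈ T.B → ∀ y, y ∈ T.B → T.deg x ≠ T.deg y → T.ip x y = 0 :=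
    fun x hx y hy h => T.ip_ne x hx y hy (degne x y h)
  -- derived products
  have E1 : c8 * b3 = b3 + T.bar b6 + b15 := by
    linear_combination T.bar b3 * hsq - b3 * hmul + hsq' + hprod15
  have E1' : c8 * T.bar b3 = T.bar b3 + b6 + T.bar b15 := by
    have h := congrArg T.bar E1
    simpa [map_mul, map_add, T.bar_bar, hbarc8] using h
  have E2 : c8 * b6 = T.bar b3 + b6 + T.bar b15 + T.bar b15 + c9 := by
    linear_combination T.bar b3 * hprod - b6 * hmul + E1' + hprod10'
  have E3 : b3 * b15 = b6 + T.bar b15 + T.bar b15 + c9 := by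
    linear_combination b6 * hmul - b3 * hprod15 - hsq + E2
  have E3' : T.bar b3 * T.bar b15 = T.bar b6 + b15 + b15 + T.bar c9 := by
    have h := congrArg T.bar E3
    simpa [map_mul, map_add, T.bar_bar] using h
  have E4 : b6 * b10 = b3 * T.bar c9 + T.bar b3 + T.bar b15 + T.bar b15 := by
    linear_combination b3 * hprod10 - b10 * hsq + E3 + hprod15' - hprod10'
  -- coefficients of b3 * c̄9
  have cf1 : T.ip (b3 * T.bar c9) c9 = 1 := by
    rw [mul_comm] at hip; exact hip
  have cf2 : T.ip (b3 * T.bar c9) (T.bar b15) = 1 := by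
    rw [T.ip_mul_bar, E3', T.ipr_add, T.ipr_add, T.ipr_add,
      ipz _ hv9m _ hv6m (by rw [hdv9, hdv6]; norm_num),
      ipz _ hv9m _ hb15 (by rw [hdv9, hd15]; norm_num),
      T.ip_self _ hv9m]
    ring
  have cf3 : T.ip (b3 * T.bar c9) 1 = 0 := by
    rw [T.ip_mul_bar, mul_one, ipz _ hv9m _ hv3m (by rw [hdv9, hdv3]; norm_num)]
  -- existence of c3
  have hPr : T.IsNat (b3 * T.bar c9 - T.bar b15 - c9) := by
    intro d hd
    by_cases h15 : d = T.bar b15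
    · subst h15
      refine ⟨0, ?_⟩
      rw [T.ipl_sub, T.ipl_sub, cf2, T.ip_self _ hv15m,
        ipz _ hc9 _ hv15m (by rw [hd9, hdv15]; norm_num)]
      norm_num
    · by_cases h9 : d = c9
      · subst h9
        refine ⟨0, ?_⟩
        rw [T.ipl_sub, T.ipl_sub, cf1, T.ip_self _ hc9,
          ipz _ hv15m _ hc9 (by rw [hdv15, hd9]; norm_num)]
        norm_num
      · obtain ⟨n, hn⟩ := hInt.1 b3 hb3 (T.bar c9) hv9m d hd
        refine ⟨n, ?_⟩
        rw [T.ipl_sub, T.ipl_sub, hn, T.ip_ne _ hv15m _ hd (fun h => h15 h.symm),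
          T.ip_ne _ hc9 _ hd (fun h => h9 h.symm)]
        ring
  have hdeg_r : T.deg (b3 * T.bar c9 - T.bar b15 - c9) = 3 := by
    rw [map_sub, map_sub, map_mul, hd3, hdv9, hdv15, hd9]; norm_num
  have hip1_r : T.ip (b3 * T.bar c9 - T.bar b15 - c9) 1 = 0 := by
    rw [T.ipl_sub, T.ipl_sub, cf3,
      ipz _ hv15m _ T.one_mem (by rw [hdv15, map_one]; norm_num),
      ipz _ hc9 _ T.one_mem (by rw [hd9, map_one]; norm_num)]
    ring
  obtain ⟨c3, hc3m, hdc3, hc3eq⟩ :=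
    T.eq_single_of_deg3 hInt hSmall _ hPr hip1_r hdeg_r
  have Main1 : b3 * T.bar c9 = T.bar b15 + c9 + c3 := by linear_combination hc3eq
  have hvc3m : T.bar c3 ∈ T.B := T.bar_mem c3 hc3m
  have Main1' : T.bar b3 * c9 = b15 + T.bar c9 + T.bar c3 := by
    have h := congrArg T.bar Main1
    simpa [map_mul, map_add, T.bar_bar] using h
  have hdvc3 : T.deg (T.bar c3) = 3 := by
    have h := congrArg T.deg Main1'
    simp only [map_mul, map_add, hdv3, hd9, hd15, hdv9] at h
    linear_combination -h
  -- c3 is distinct from b3 and bar b3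
  have cfb3 : T.ip c3 b3 = 0 := by
    have h0 : T.ip (b3 * T.bar c9) b3 = 0 := by
      rw [T.ip_mul_bar, hmul', T.ipr_add,
        ipz _ hv9m _ T.one_mem (by rw [hdv9, map_one]; norm_num),
        ipz _ hv9m _ hc8 (by rw [hdv9, hd8]; norm_num)]
      ring
    rw [Main1, T.ipl_add, T.ipl_add,
      ipz _ hv15m _ hb3 (by rw [hdv15, hd3]; norm_num),
      ipz _ hc9 _ hb3 (by rw [hd9, hd3]; norm_num)] at h0
    linear_combination h0
  have cne1 : c3 ≠ b3 := fun h => by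
    rw [h, T.ip_self _ hb3] at cfb3; norm_num at cfb3
  have cfvb3 : T.ip c3 (T.bar b3) = 0 := by
    have h0 : T.ip (b3 * T.bar c9) (T.bar b3) = 0 := by
      rw [T.ip_mul_bar, hsq', T.ipr_add,
        ipz _ hv9m _ hb3 (by rw [hdv9, hd3]; norm_num),
        ipz _ hv9m _ hv6m (by rw [hdv9, hdv6]; norm_num)]
      ring
    rw [Main1, T.ipl_add, T.ipl_add,
      ipz _ hv15m _ hv3m (by rw [hdv15, hdv3]; norm_num),
      ipz _ hc9 _ hv3m (by rw [hd9, hdv3]; norm_num)] at h0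
    linear_combination h0
  have cne2 : c3 ≠ T.bar b3 := fun h => by
    rw [h, T.ip_self _ hv3m] at cfvb3; norm_num at cfvb3
  have E4' : b6 * b10 =
      T.bar b3 + c3 + c9 + T.bar b15 + T.bar b15 + T.bar b15 := by
    linear_combination E4 + Main1
  -- b3 * bar c3 = c9
  have cf4 : T.ip (b3 * T.bar c3) c9 = 1 := by
    rw [T.ip_mul_bar, Main1', T.ipr_add, T.ipr_add,
      ipz _ hvc3m _ hb15 (by rw [hdvc3, hd15]; norm_num),
      ipz _ hvc3m _ hv9m (by rw [hdvc3, hdv9]; norm_num),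
      T.ip_self _ hvc3m]
    ring
  have hPs : T.IsNat (b3 * T.bar c3 - c9) := by
    intro d hd
    by_cases h9 : d = c9
    · subst h9
      exact ⟨0, by rw [T.ipl_sub, cf4, T.ip_self _ hc9]; norm_num⟩
    · obtain ⟨n, hn⟩ := hInt.1 b3 hb3 (T.bar c3) hvc3m d hd
      exact ⟨n, by rw [T.ipl_sub, hn, T.ip_ne _ hc9 _ hd (fun h => h9 h.symm)]; ring⟩
  have hs0 : b3 * T.bar c3 - c9 = 0 := by
    refine T.eq_zero_of_deg0 hInt hSmall _ hPs ?_
    rw [map_sub, map_mul, hd3, hdvc3, hd9]; norm_num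
  have Main2 : b3 * T.bar c3 = c9 := by linear_combination hs0
  have Main2' : T.bar b3 * c3 = T.bar c9 := by
    have h := congrArg T.bar Main2
    simpa [map_mul, T.bar_bar] using h
  have hv : c8 * T.bar c3 = b15 + T.bar c9 := by
    linear_combination T.bar b3 * Main2 - T.bar c3 * hmul + Main1'
  have hv' : c8 * c3 = T.bar b15 + c9 := by
    have h := congrArg T.bar hv
    simpa [map_mul, map_add, T.bar_bar, hbarc8] using h
  -- b3 * c3 = b9
  have Hx : (b3 * c3) * T.bar b3 = c3 + T.bar b15 + c9 := by
    linear_combination c3 * hmul + hv'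
  have hnrm1 : T.ip (b3 * c3) (b3 * c3) = 1 := by
    rw [T.ip_assoc (b3 * c3) b3 c3, Hx, T.ipl_add, T.ipl_add, T.ip_self _ hc3m,
      ipz _ hv15m _ hc3m (by rw [hdv15, hdc3]; norm_num),
      ipz _ hc9 _ hc3m (by rw [hd9, hdc3]; norm_num)]
    ring
  obtain ⟨b9, hb9m, Main3⟩ :=
    T.mem_of_norm1 hInt hSmall _ (T.isNat_mul hInt hb3 hc3m) hnrm1
  have hdb9 : T.deg b9 = 9 := by
    have h := congrArg T.deg Main3
    rw [map_mul, hd3, hdc3] at h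
    linear_combination -h
  have hvb9m : T.bar b9 ∈ T.B := T.bar_mem b9 hb9m
  have Main3' : T.bar b3 * T.bar c3 = T.bar b9 := by
    have h := congrArg T.bar Main3
    simpa [map_mul] using h
  -- the element t = c3 c̄3 - 1
  have cf_t1 : T.ip (c3 * T.bar c3) 1 = 1 := by
    rw [T.ip_mul_bar, mul_one, T.ip_self _ hvc3m]
  have hPt : T.IsNat (c3 * T.bar c3 - 1) := by
    intro d hd
    by_cases h1 : d = 1
    · subst h1
      exact ⟨0, by rw [T.ipl_sub, cf_t1, T.ip_self _ T.one_mem]; norm_num⟩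
    · obtain ⟨n, hn⟩ := hInt.1 c3 hc3m (T.bar c3) hvc3m d hd
      exact ⟨n, by
        rw [T.ipl_sub, hn, T.ip_ne _ T.one_mem _ hd (fun h => h1 h.symm)]; ring⟩
  have hdt : T.deg (c3 * T.bar c3 - 1) = ((8 : ℕ) : ℂ) := by
    rw [map_sub, map_mul, hdc3, hdvc3, map_one]; norm_num
  have htb10 : T.ip (c3 * T.bar c3 - 1) b10 = 0 :=
    T.coeff_zero_of_deg_lt hInt hSmall _ b10 hPt hb10 8 10 hdt
      (by rw [hd10]; norm_num) (by norm_num)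
  have htc8 : T.ip (c3 * T.bar c3) c8 = 0 := by
    rw [T.ip_mul_bar, mul_comm (T.bar c3) c8, hv, T.ipr_add,
      ipz _ hvc3m _ hb15 (by rw [hdvc3, hd15]; norm_num),
      ipz _ hvc3m _ hv9m (by rw [hdvc3, hdv9]; norm_num)]
    ring
  -- norm of b3 * b̄9
  have F1 : b3 * T.bar b9 = T.bar c3 + b15 + T.bar c9 := by
    linear_combination T.bar c3 * hmul - b3 * Main3' + hv
  have n3 : T.ip (b3 * T.bar b9) (b3 * T.bar b9) = 3 := by
    rw [F1]
    simp only [T.ipl_add, T.ipr_add]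
    rw [T.ip_self _ hvc3m, T.ip_self _ hb15, T.ip_self _ hv9m,
      ipz _ hvc3m _ hb15 (by rw [hdvc3, hd15]; norm_num),
      ipz _ hvc3m _ hv9m (by rw [hdvc3, hdv9]; norm_num),
      ipz _ hb15 _ hvc3m (by rw [hd15, hdvc3]; norm_num),
      ipz _ hb15 _ hv9m (by rw [hd15, hdv9]; norm_num),
      ipz _ hv9m _ hvc3m (by rw [hdv9, hdvc3]; norm_num),
      ipz _ hv9m _ hb15 (by rw [hdv9, hd15]; norm_num)]
    ring
  have X2 : T.ip (c8 * T.bar b9) (T.bar b9) = 2 := by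
    have h2 : (b3 * T.bar b9) * T.bar b3 = T.bar b9 + c8 * T.bar b9 := by
      linear_combination T.bar b9 * hmul
    rw [T.ip_assoc (b3 * T.bar b9) b3 (T.bar b9), h2, T.ipl_add,
      T.ip_self _ hvb9m] at n3
    linear_combination n3
  have X3 : T.ip c8 (b9 * T.bar b9) = 2 := by
    rw [mul_comm] at X2
    rw [T.ip_mul_bar, T.bar_bar] at X2
    exact X2
  have G : b9 * T.bar b9 = (1 + c8) * (c3 * T.bar c3) := by
    linear_combination (-(T.bar b9)) * Main3 - (b3 * c3) * Main3' +
      (c3 * T.bar c3) * hmul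
  have e1 : T.ip c8 (c3 * T.bar c3) = 0 := by rw [T.ip_symm]; exact htc8
  have X4 : T.ip (c8 * c8) (c3 * T.bar c3) = 2 := by
    rw [G] at X3
    have hexp : (1 + c8) * (c3 * T.bar c3) =
        c3 * T.bar c3 + c8 * (c3 * T.bar c3) := by ring
    rw [hexp, T.ipr_add, e1, T.ip_assoc c8 c8 (c3 * T.bar c3), hbarc8] at X3
    linear_combination X3
  have G2 : c8 * c8 = c8 + b10 + b10 + b6 * T.bar b6 := by
    linear_combination T.bar b3 * T.bar b3 * hsq + (T.bar b3 + b6) * hsq' +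
      hprod' + hprod - (b3 * T.bar b3 + c8) * hmul
  have X5 : T.ip (b6 * T.bar b6) (c3 * T.bar c3) = 2 := by
    rw [G2, T.ipl_add, T.ipl_add, T.ipl_add, e1] at X4
    have e3 : T.ip b10 (c3 * T.bar c3) = 0 := by
      have hsplit : c3 * T.bar c3 = 1 + (c3 * T.bar c3 - 1) := by ring
      rw [T.ip_symm, hsplit, T.ipl_add, htb10,
        ipz _ T.one_mem _ hb10 (by rw [map_one, hd10]; norm_num)]
      ring
    rw [e3] at X4
    linear_combination X4
  -- v6 * c3 = b10 + s8
  have n2 : T.ip (T.bar b6 * c3) (T.bar b6 * c3) = 2 := by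
    rw [T.ip_assoc (T.bar b6 * c3) (T.bar b6) c3, T.bar_bar]
    have h : (T.bar b6 * c3) * b6 = c3 * (b6 * T.bar b6) := by ring
    rw [h, T.ip_mul_bar, mul_comm (T.bar c3) c3]
    exact X5
  have cf5 : T.ip (T.bar b6 * c3) b10 = 1 := by
    rw [T.ip_mul_bar, T.bar_bar, E4']
    rw [T.ipr_add, T.ipr_add, T.ipr_add, T.ipr_add, T.ipr_add, cfvb3,
      T.ip_self _ hc3m,
      ipz _ hc3m _ hc9 (by rw [hdc3, hd9]; norm_num),
      ipz _ hc3m _ hv15m (by rw [hdc3, hdv15]; norm_num)]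
    ring
  obtain ⟨s8, hs8m, hs8ne, Main4⟩ :=
    T.decomp_norm2 hInt hSmall _ b10 (T.isNat_mul hInt hv6m hc3m) hb10 n2 cf5
  have hds8 : T.deg s8 = 8 := by
    have h := congrArg T.deg Main4
    simp only [map_mul, map_add, hdv6, hdc3, hd10] at h
    linear_combination -h
  have F2 : T.bar b15 * c3 = b15 + T.bar b6 + b3 * s8 := by
    linear_combination b3 * Main4 - c3 * hprod15' - Main2' + hprod10
  have F3 : b6 * c3 + b3 * s8 = b15 + b15 + T.bar c9 + T.bar c3 := by
    linear_combination T.bar b3 * hv' - c3 * E1' - Main2' - F2 + E3' + Main1'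
  -- solve for b6 * c3
  have hNb6c3 : T.IsNat (b6 * c3) := T.isNat_mul hInt hb6 hc3m
  have hNb3s8 : T.IsNat (b3 * s8) := T.isNat_mul hInt hb3 hs8m
  obtain ⟨a15, ha15⟩ := hNb6c3 b15 hb15
  obtain ⟨a9, ha9⟩ := hNb6c3 (T.bar c9) hv9m
  obtain ⟨a3, ha3⟩ := hNb6c3 (T.bar c3) hvc3m
  obtain ⟨k15, hk15⟩ := hNb3s8 b15 hb15
  obtain ⟨k9, hk9⟩ := hNb3s8 (T.bar c9) hv9m
  obtain ⟨k3, hk3⟩ := hNb3s8 (T.bar c3) hvc3m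
  have hA : a15 + k15 = 2 := by
    have h := congrArg (fun z => T.ip z b15) F3
    simp only [T.ipl_add] at h
    rw [ha15, hk15, T.ip_self _ hb15,
      ipz _ hv9m _ hb15 (by rw [hdv9, hd15]; norm_num),
      ipz _ hvc3m _ hb15 (by rw [hdvc3, hd15]; norm_num)] at h
    have h2 : ((a15 + k15 : ℕ) : ℂ) = ((2 : ℕ) : ℂ) := by push_cast; linear_combination h
    exact_mod_cast h2
  have hB : a9 + k9 = 1 := by
    have h := congrArg (fun z => T.ip z (T.bar c9)) F3
    simp only [T.ipl_add] at h
    rw [ha9, hk9, T.ip_self _ hv9m,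
      ipz _ hb15 _ hv9m (by rw [hd15, hdv9]; norm_num),
      ipz _ hvc3m _ hv9m (by rw [hdvc3, hdv9]; norm_num)] at h
    have h2 : ((a9 + k9 : ℕ) : ℂ) = ((1 : ℕ) : ℂ) := by push_cast; linear_combination h
    exact_mod_cast h2
  have hC : a3 + k3 = 1 := by
    have h := congrArg (fun z => T.ip z (T.bar c3)) F3
    simp only [T.ipl_add] at h
    rw [ha3, hk3, T.ip_self _ hvc3m,
      ipz _ hb15 _ hvc3m (by rw [hd15, hdvc3]; norm_num),
      ipz _ hv9m _ hvc3m (by rw [hdv9, hdvc3]; norm_num)] at h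
    have h2 : ((a3 + k3 : ℕ) : ℂ) = ((1 : ℕ) : ℂ) := by push_cast; linear_combination h
    exact_mod_cast h2
  have hzero : ∀ d ∈ T.B, d ≠ b15 → d ≠ T.bar c9 → d ≠ T.bar c3 →
      T.ip (b6 * c3) d = 0 := by
    intro d hd h1 h2 h3
    obtain ⟨n, hn⟩ := hNb6c3 d hd
    obtain ⟨k, hk⟩ := hNb3s8 d hd
    have h := congrArg (fun z => T.ip z d) F3
    simp only [T.ipl_add] at h
    rw [hn, hk, T.ip_ne _ hb15 _ hd (fun h => h1 h.symm),
      T.ip_ne _ hv9m _ hd (fun h => h2 h.symm),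
      T.ip_ne _ hvc3m _ hd (fun h => h3 h.symm)] at h
    have h4 : ((n + k : ℕ) : ℂ) = ((0 : ℕ) : ℂ) := by push_cast; linear_combination h
    have h5 : n + k = 0 := by exact_mod_cast h4
    rw [hn]
    have : n = 0 := by omega
    rw [this]; norm_num
  have hy : b6 * c3 = (a15 : ℂ) • b15 + (a9 : ℂ) • T.bar c9 + (a3 : ℂ) • T.bar c3 := by
    apply T.ext_ip
    intro d hd
    rw [T.ipl_add, T.ipl_add, T.ipl_smul, T.ipl_smul, T.ipl_smul]
    by_cases h1 : d = b15
    · subst h1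
      rw [ha15, T.ip_self _ hb15,
        ipz _ hv9m _ hb15 (by rw [hdv9, hd15]; norm_num),
        ipz _ hvc3m _ hb15 (by rw [hdvc3, hd15]; norm_num)]
      ring
    · by_cases h2 : d = T.bar c9
      · subst h2
        rw [ha9, T.ip_self _ hv9m,
          ipz _ hb15 _ hv9m (by rw [hd15, hdv9]; norm_num),
          ipz _ hvc3m _ hv9m (by rw [hdvc3, hdv9]; norm_num)]
        ring
      · by_cases h3 : d = T.bar c3
        · subst h3
          rw [ha3, T.ip_self _ hvc3m,
            ipz _ hb15 _ hvc3m (by rw [hd15, hdvc3]; norm_num),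
            ipz _ hv9m _ hvc3m (by rw [hdv9, hdvc3]; norm_num)]
          ring
        · rw [hzero d hd h1 h2 h3, T.ip_ne _ hb15 _ hd (fun h => h1 h.symm),
            T.ip_ne _ hv9m _ hd (fun h => h2 h.symm),
            T.ip_ne _ hvc3m _ hd (fun h => h3 h.symm)]
          ring
  have hdeqn : 15 * a15 + 9 * a9 + 3 * a3 = 18 := by
    have h := congrArg T.deg hy
    rw [map_mul, hd6, hdc3, map_add, map_add, map_smul, map_smul, map_smul,
      hd15, hdv9, hdvc3] at h
    simp only [smul_eq_mul] at h
    have h2 : ((15 * a15 + 9 * a9 + 3 * a3 : ℕ) : ℂ) = ((18 : ℕ) : ℂ) := by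
      push_cast; linear_combination -h
    exact_mod_cast h2
  have hva15 : a15 = 1 := by omega
  have hva9 : a9 = 0 := by omega
  have hva3 : a3 = 1 := by omega
  have Main5 : b6 * c3 = b15 + T.bar c3 := by
    rw [hy, hva15, hva9, hva3]
    norm_num
  -- b9 is real
  have Hb9 : b9 * b3 = T.bar c9 + b6 * c3 := by
    linear_combination c3 * hsq - b3 * Main3 + Main2'
  have ipb9 : T.ip b9 (T.bar b9) = 1 := by
    rw [← Main3', T.ip_assoc b9 (T.bar b3) (T.bar c3), T.bar_bar, Hb9, T.ipl_add,
      ipz _ hv9m _ hvc3m (by rw [hdv9, hdvc3]; norm_num), Main5, T.ipl_add,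
      ipz _ hb15 _ hvc3m (by rw [hd15, hdvc3]; norm_num), T.ip_self _ hvc3m]
    ring
  have breal : T.bar b9 = b9 := by
    by_contra h
    rw [T.ip_ne _ hb9m _ hvb9m (fun hh => h hh.symm)] at ipb9
    norm_num at ipb9
  -- analysis of c3 * c3
  have Main5' : T.bar b6 * T.bar c3 = T.bar b15 + c3 := by
    have h := congrArg T.bar Main5
    simpa [map_mul, map_add, T.bar_bar] using h
  have cf6 : T.ip (c3 * c3) (T.bar b6) = 1 := by
    rw [T.ip_mul_bar, mul_comm (T.bar c3) (T.bar b6), Main5', T.ipr_add,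
      ipz _ hc3m _ hv15m (by rw [hdc3, hdv15]; norm_num), T.ip_self _ hc3m]
    ring
  have cnr : T.bar c3 ≠ c3 := by
    intro hreal
    have cfo : T.ip (c3 * c3) 1 = 1 := by
      rw [T.ip_mul_bar, mul_one, hreal, T.ip_self _ hc3m]
    have hP2 : T.IsNat (c3 * c3 - 1 - T.bar b6) := by
      intro d hd
      by_cases h1 : d = 1
      · subst h1
        refine ⟨0, ?_⟩
        rw [T.ipl_sub, T.ipl_sub, cfo, T.ip_self _ T.one_mem,
          ipz _ hv6m _ T.one_mem (by rw [hdv6, map_one]; norm_num)]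
        norm_num
      · by_cases h6 : d = T.bar b6
        · subst h6
          refine ⟨0, ?_⟩
          rw [T.ipl_sub, T.ipl_sub, cf6, T.ip_self _ hv6m,
            ipz _ T.one_mem _ hv6m (by rw [map_one, hdv6]; norm_num)]
          norm_num
        · obtain ⟨n, hn⟩ := hInt.1 c3 hc3m c3 hc3m d hd
          refine ⟨n, ?_⟩
          rw [T.ipl_sub, T.ipl_sub, hn, T.ip_ne _ T.one_mem _ hd (fun h => h1 h.symm),
            T.ip_ne _ hv6m _ hd (fun h => h6 h.symm)]
          ring
    refine T.false_of_deg2 hInt hSmall _ hP2 ?_ ?_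
    · rw [T.ipl_sub, T.ipl_sub, cfo, T.ip_self _ T.one_mem,
        ipz _ hv6m _ T.one_mem (by rw [hdv6, map_one]; norm_num)]
      ring
    · rw [map_sub, map_sub, map_mul, hdc3, map_one, hdv6]; norm_num
  have cf7 : T.ip (c3 * c3) 1 = 0 := by
    rw [T.ip_mul_bar, mul_one, T.ip_ne _ hc3m _ hvc3m (fun h => cnr h.symm)]
  have hPy : T.IsNat (c3 * c3 - T.bar b6) := by
    intro d hd
    by_cases h6 : d = T.bar b6
    · subst h6
      exact ⟨0, by rw [T.ipl_sub, cf6, T.ip_self _ hv6m]; norm_num⟩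
    · obtain ⟨n, hn⟩ := hInt.1 c3 hc3m c3 hc3m d hd
      exact ⟨n, by rw [T.ipl_sub, hn, T.ip_ne _ hv6m _ hd (fun h => h6 h.symm)]; ring⟩
  obtain ⟨y3, hy3m, hdy3, hy3eq⟩ := T.eq_single_of_deg3 hInt hSmall _ hPy
    (by
      rw [T.ipl_sub, cf7, ipz _ hv6m _ T.one_mem (by rw [hdv6, map_one]; norm_num)]
      ring)
    (by rw [map_sub, map_mul, hdc3, hdv6]; norm_num)
  have Main6 : c3 * c3 = T.bar b6 + y3 := by linear_combination hy3eq
  have n2' : T.ip (c3 * c3) (c3 * c3) = 2 := by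
    rw [Main6]
    simp only [T.ipl_add, T.ipr_add]
    rw [T.ip_self _ hv6m, T.ip_self _ hy3m,
      ipz _ hv6m _ hy3m (by rw [hdv6, hdy3]; norm_num),
      ipz _ hy3m _ hv6m (by rw [hdy3, hdv6]; norm_num)]
    ring
  have n2'' : T.ip (c3 * T.bar c3) (c3 * T.bar c3) = 2 := by
    have hh : (c3 * c3) * T.bar c3 = c3 * (c3 * T.bar c3) := by ring
    rw [T.ip_assoc (c3 * c3) c3 c3, hh, T.ip_mul_bar, mul_comm (T.bar c3) c3] at n2'
    exact n2'
  obtain ⟨b8, hb8m, hb8ne1, Main7⟩ := T.decomp_norm2 hInt hSmall _ 1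
    (T.isNat_mul hInt hc3m hvc3m) T.one_mem n2'' cf_t1
  have hdb8 : T.deg b8 = 8 := by
    have h := congrArg T.deg Main7
    rw [map_mul, hdc3, hdvc3, map_add, map_one] at h
    linear_combination -h
  have hbarb8 : T.bar b8 = b8 := by
    have h := congrArg T.bar Main7
    simp only [map_mul, map_add, map_one, T.bar_bar] at h
    linear_combination Main7 - h
  have hb8nec8 : b8 ≠ c8 := by
    intro h
    rw [Main7, T.ipl_add, ipz _ T.one_mem _ hc8 (by rw [map_one, hd8]; norm_num),
      h, T.ip_self _ hc8] at htc8
    norm_num at htc8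
  exact ⟨c3, hc3m, hdc3, Main1, ⟨b8, hb8m, hdb8, hbarb8, hb8nec8, Main7⟩, Main2,
    b9, hb9m, hdb9, breal, Main3⟩
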